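/- The chromatic number of the unit-distance graph on ℝ² is at least 4: there is no function c : ℝ² → Fin 3 such that c(x) ≠ c(y) whenever ‖x − y‖ = 1. -/

import Mathlib

/-- The unit-distance graph on the Euclidean plane `ℝ²`. -/
def planeGraph : SimpleGraph (EuclideanSpace ℝ (Fin 2)) where
  Adj x y := dist x y = 1
  symm := ⟨fun x y h => by show dist y x = 1; rw [dist_comm]; exact h⟩
  loopless := ⟨fun x h => by simp at h⟩

lemma dist_formula (x y : EuclideanSpace ℝ (Fin 2)) :
    dist x y = Real.sqrt ((x 0 - y 0)^2 + (x 1 - y 1)^2) := by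
  rw [EuclideanSpace.dist_eq, Fin.sum_univ_two]
  simp [Real.dist_eq, sq_abs]

lemma dist_eq_one_of (x y : EuclideanSpace ℝ (Fin 2))
    (h : (x 0 - y 0)^2 + (x 1 - y 1)^2 = 1) : dist x y = 1 := by
  rw [dist_formula, h, Real.sqrt_one]

lemma dist_eq_sqrt3_of (x y : EuclideanSpace ℝ (Fin 2))
    (h : (x 0 - y 0)^2 + (x 1 - y 1)^2 = 3) : dist x y = Real.sqrt 3 := by
  rw [dist_formula, h]

/-- Any valid 3-coloring of the plane is constant on pairs at distance √3
(the "rhombus"/diamond argument from the Moser spindle proof). -/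
lemma same_color_sqrt3 (c : EuclideanSpace ℝ (Fin 2) → Fin 3)
    (hc : ∀ x y : EuclideanSpace ℝ (Fin 2), dist x y = 1 → c x ≠ c y)
    (x y : EuclideanSpace ℝ (Fin 2)) (hxy : dist x y = Real.sqrt 3) :
    c x = c y := by
  have h0 : (0:ℝ) ≤ (x 0 - y 0)^2 + (x 1 - y 1)^2 := by positivity
  have h3 : (x 0 - y 0)^2 + (x 1 - y 1)^2 = 3 := by
    rw [dist_formula] at hxy
    rw [← Real.sq_sqrt h0, hxy, Real.sq_sqrt]; norm_num
  set s := Real.sqrt 3 with hs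
  have hs2 : s^2 = 3 := Real.sq_sqrt (by norm_num)
  -- the two apex points of the rhombus on segment x-y
  set p : EuclideanSpace ℝ (Fin 2) :=
    !₂[(x 0 + y 0)/2 + s*(x 1 - y 1)/6, (x 1 + y 1)/2 - s*(x 0 - y 0)/6] with hp
  set q : EuclideanSpace ℝ (Fin 2) :=
    !₂[(x 0 + y 0)/2 - s*(x 1 - y 1)/6, (x 1 + y 1)/2 + s*(x 0 - y 0)/6] with hq
  have hp0 : p 0 = (x 0 + y 0)/2 + s*(x 1 - y 1)/6 := rfl
  have hp1 : p 1 = (x 1 + y 1)/2 - s*(x 0 - y 0)/6 := rfl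
  have hq0 : q 0 = (x 0 + y 0)/2 - s*(x 1 - y 1)/6 := rfl
  have hq1 : q 1 = (x 1 + y 1)/2 + s*(x 0 - y 0)/6 := rfl
  have hxp : dist x p = 1 := by
    apply dist_eq_one_of
    rw [hp0, hp1]
    linear_combination (1/3) * h3 + (((x 0 - y 0)^2 + (x 1 - y 1)^2)/36) * hs2
  have hxq : dist x q = 1 := by
    apply dist_eq_one_of
    rw [hq0, hq1]
    linear_combination (1/3) * h3 + (((x 0 - y 0)^2 + (x 1 - y 1)^2)/36) * hs2
  have hyp : dist y p = 1 := by
    apply dist_eq_one_of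
    rw [hp0, hp1]
    linear_combination (1/3) * h3 + (((x 0 - y 0)^2 + (x 1 - y 1)^2)/36) * hs2
  have hyq : dist y q = 1 := by
    apply dist_eq_one_of
    rw [hq0, hq1]
    linear_combination (1/3) * h3 + (((x 0 - y 0)^2 + (x 1 - y 1)^2)/36) * hs2
  have hpq : dist p q = 1 := by
    apply dist_eq_one_of
    rw [hp0, hp1, hq0, hq1]
    linear_combination (1/3) * h3 + (((x 0 - y 0)^2 + (x 1 - y 1)^2)/9) * hs2
  have h1 := hc x p hxp
  have h2 := hc x q hxq
  have h3' := hc y p hyp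
  have h4 := hc y q hyq
  have h5 := hc p q hpq
  have e1 : (c x).val ≠ (c p).val := fun h => h1 (Fin.ext h)
  have e2 : (c x).val ≠ (c q).val := fun h => h2 (Fin.ext h)
  have e3 : (c y).val ≠ (c p).val := fun h => h3' (Fin.ext h)
  have e4 : (c y).val ≠ (c q).val := fun h => h4 (Fin.ext h)
  have e5 : (c p).val ≠ (c q).val := fun h => h5 (Fin.ext h)
  have l1 := (c x).isLt
  have l2 := (c y).isLt
  have l3 := (c p).isLt
  have l4 := (c q).isLt
  exact Fin.ext (by omega)

/-- No 3-coloring of the plane avoids distance 1. -/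
lemma no_three_coloring :
    ¬ ∃ c : EuclideanSpace ℝ (Fin 2) → Fin 3,
        ∀ x y : EuclideanSpace ℝ (Fin 2), dist x y = 1 → c x ≠ c y := by
  rintro ⟨c, hc⟩
  set s := Real.sqrt 3 with hs
  have hs2 : s^2 = 3 := Real.sq_sqrt (by norm_num)
  set t := Real.sqrt 33 with ht
  have ht2 : t^2 = 33 := Real.sq_sqrt (by norm_num)
  set x : EuclideanSpace ℝ (Fin 2) := !₂[0, 0] with hx
  set z₁ : EuclideanSpace ℝ (Fin 2) := !₂[s, 0] with hz1
  set z₂ : EuclideanSpace ℝ (Fin 2) := !₂[5*s/6, t/6] with hz2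
  have hx0 : x 0 = 0 := rfl
  have hx1 : x 1 = 0 := rfl
  have hz10 : z₁ 0 = s := rfl
  have hz11 : z₁ 1 = 0 := rfl
  have hz20 : z₂ 0 = 5*s/6 := rfl
  have hz21 : z₂ 1 = t/6 := rfl
  have d1 : dist x z₁ = Real.sqrt 3 := by
    apply dist_eq_sqrt3_of
    rw [hx0, hx1, hz10, hz11]
    linear_combination hs2
  have d2 : dist x z₂ = Real.sqrt 3 := by
    apply dist_eq_sqrt3_of
    rw [hx0, hx1, hz20, hz21]
    linear_combination (25/36) * hs2 + (1/36) * ht2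
  have d3 : dist z₁ z₂ = 1 := by
    apply dist_eq_one_of
    rw [hz10, hz11, hz20, hz21]
    linear_combination (1/36) * hs2 + (1/36) * ht2
  have c1 : c x = c z₁ := same_color_sqrt3 c hc x z₁ d1
  have c2 : c x = c z₂ := same_color_sqrt3 c hc x z₂ d2
  exact hc z₁ z₂ d3 (c1 ▸ c2)

/-- The chromatic number of the unit-distance graph on `ℝ²` is at least 4:
there is no 3-coloring of the plane avoiding distance 1. -/
theorem plane_chromatic_ge_four :
    4 ≤ planeGraph.chromaticNumber ∧
    ¬ ∃ c : EuclideanSpace ℝ (Fin 2) → Fin 3,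
        ∀ x y : EuclideanSpace ℝ (Fin 2), dist x y = 1 → c x ≠ c y := by
  refine ⟨?_, no_three_coloring⟩
  by_contra h
  push_neg at h
  have h3 : planeGraph.chromaticNumber ≤ (3 : ℕ) := by
    have h4 : planeGraph.chromaticNumber < (3:ℕ∞) + 1 := by
      have e : (3:ℕ∞) + 1 = 4 := by norm_num
      rw [e]; exact h
    exact Order.le_of_lt_add_one h4
  have hcol : planeGraph.Colorable 3 :=
    (SimpleGraph.chromaticNumber_le_iff_colorable).mp h3
  obtain ⟨C⟩ := hcol
  exact no_three_coloring ⟨C, fun x y hxy => C.valid (show planeGraph.Adj x y from hxy)⟩
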